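/- arXiv:1506.03613 — 2 statements merged into one kernel-verified Lean document; each statement's English description precedes it below -/
import Mathlib

section
/- Let σ : V × V → V satisfy σ(x,y) ∈ N[x] for all x,y ∈ V, and let T ∈ ℕ be such that σ guarantees capture within T rounds in the turn-based game: for all x₀,y₀ ∈ V and every sequence (y_t)_{t≥0} with y_{t+1} ∈ N[y_t] for all t, the sequence defined by x_{t+1} = σ(x_t, y_t) satisfies x_{t+1} = y_t for some t < T. Let π_C^# be the memoryless randomized cop strategy in the concurrent game defined by: from position (x,y), sample a vertex v uniformly at random from N[y] and move the cop to σ(x,v). Then there is a finite constant M (depending only on G and T) such that for every robber strategy π_R and every initial position (x,y) ∈ V², the expected capture time satisfies v_{(x,y)}(π_C^#, π_R) ≤ Σ_{k=1}^∞ k·T·(1 − (1/n)^T)^k ≤ M < ∞, where n = |V|. -/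
open Finset Filter

noncomputable section

variable {V : Type*} [Fintype V] [DecidableEq V]

/-- The closed neighborhood `N[u]` of a vertex `u`: `u` together with its neighbors. -/
def nbhd (G : SimpleGraph V) [DecidableRel G.Adj] (u : V) : Finset V :=
  insert u (G.neighborFinset u)

lemma nbhd_nonempty (G : SimpleGraph V) [DecidableRel G.Adj] (u : V) :
    (nbhd G u).Nonempty :=
  ⟨u, Finset.mem_insert_self u _⟩

/-! ### The single-cop concurrent game, with the expected-capture-time payoff -/

/-- A randomized strategy in the single-cop concurrent game: to each finite history of
positions (cop location, robber location) it assigns a distribution over next moves. -/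
abbrev Strat (V : Type*) := List (V × V) → PMF V

/-- A strategy is memoryless if the distribution it assigns depends only on the
current (most recent) position. -/
def Memoryless (π : Strat V) : Prop :=
  ∀ h₁ h₂ : List (V × V), h₁.getLast? = h₂.getLast? → π h₁ = π h₂

/-- The single-cop CCCR transition function: simultaneous moves within closed
neighborhoods (illegal moves ignored), capture positions are absorbing, and a swap of
adjacent vertices is an \"en passant\" capture. -/
def step1 (G : SimpleGraph V) [DecidableRel G.Adj] (p : V × V) (u w : V) : V × V :=
  if p.1 = p.2 then p
  else
    let u' := if u ∈ nbhd G p.1 then u else p.1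
    let w' := if w ∈ nbhd G p.2 then w else p.2
    if u' = p.2 ∧ w' = p.1 then (u', u') else (u', w')

/-- The distribution over histories of the first `t+1` positions, induced by the
strategies `πC, πR` and the initial position `init`. -/
def play1 (G : SimpleGraph V) [DecidableRel G.Adj]
    (πC πR : Strat V) (init : V × V) : ℕ → PMF (List (V × V))
  | 0 => PMF.pure [init]
  | (t+1) => (play1 G πC πR init t).bind fun h =>
      (πC h).bind fun u => (πR h).bind fun w =>
        PMF.pure (h ++ [step1 G (h.getLast?.getD init) u w])

/-- The probability that cop and robber occupy different vertices at time `t`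
(capture is absorbing, so this is the probability that the robber is still free). -/
def freeProb1 (G : SimpleGraph V) [DecidableRel G.Adj]
    (πC πR : Strat V) (init : V × V) (t : ℕ) : ENNReal :=
  (play1 G πC πR init t).toOuterMeasure
    {h | (h.getLast?.getD init).1 ≠ (h.getLast?.getD init).2}

/-- The payoff: the expected number of rounds `t ≥ 0` at which cop and robber occupy
different vertices, i.e. the expected capture time. -/
def payoff (G : SimpleGraph V) [DecidableRel G.Adj]
    (πC πR : Strat V) (init : V × V) : ENNReal :=
  ∑' t : ℕ, freeProb1 G πC πR init t

/-- The (upper) value of the game started at `init`; the cop minimizes and the robber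
maximizes the expected capture time. -/
def gameValue (G : SimpleGraph V) [DecidableRel G.Adj] (init : V × V) : ENNReal :=
  ⨅ πC : Strat V, ⨆ πR : Strat V, payoff G πC πR init

/-- The cop trajectory generated in the turn-based game by the positional cop strategy
`σ` from initial cop position `x₀`, against robber trajectory `ys`:
`x_{t+1} = σ (x_t, y_t)`. -/
def copSeq (σ : V × V → V) (x₀ : V) (ys : ℕ → V) : ℕ → V
  | 0 => x₀
  | (t+1) => σ (copSeq σ x₀ ys t, ys t)

/-- The memoryless randomized cop strategy `π_C^#` for the concurrent game: from
position `(x, y)`, sample a vertex `v` uniformly at random from `N[y]` and move the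
cop to `σ (x, v)`. -/
def piCSharp (G : SimpleGraph V) [DecidableRel G.Adj] [Nonempty V]
    (σ : V × V → V) : Strat V := fun h =>
  match h.getLast? with
  | some p => (PMF.uniformOfFinset (nbhd G p.2) (nbhd_nonempty G p.2)).map fun v => σ (p.1, v)
  | none => PMF.uniformOfFintype V

/-! ### Auxiliary development for the proof -/

section AuxProof

variable (G : SimpleGraph V) [DecidableRel G.Adj]

/-- Capture guarantee within `j` steps, for (shifted) robber trajectories starting
in `N[y]`. -/
def GoodCop (σ : V × V → V) (j : ℕ) (x y : V) : Prop :=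
  ∀ ys : ℕ → V, ys 0 ∈ nbhd G y → (∀ t, ys (t+1) ∈ nbhd G (ys t)) →
    ∃ t < j, copSeq σ x ys (t+1) = ys t

lemma goodCop_zero_false (σ : V × V → V) (x y : V) : ¬ GoodCop G σ 0 x y := by
  intro hg
  obtain ⟨t, ht, -⟩ := hg (fun _ => y) (Finset.mem_insert_self _ _)
    (fun _ => Finset.mem_insert_self _ _)
  omega

lemma copSeq_shift (σ : V × V → V) (x y' : V) (ys : ℕ → V) (t : ℕ) :
    copSeq σ x (fun t => Nat.rec y' (fun s _ => ys s) t) (t+1) = copSeq σ (σ (x, y')) ys t := by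
  induction t with
  | zero => rfl
  | succ s ih =>
      show σ (copSeq σ x (fun t => Nat.rec y' (fun s _ => ys s) t) (s+1), ys s) = _
      rw [ih]
      rfl

lemma goodCop_step (σ : V × V → V) {j : ℕ} {x y y' : V}
    (hg : GoodCop G σ (j+1) x y) (hy' : y' ∈ nbhd G y) (hne : σ (x, y') ≠ y') :
    GoodCop G σ j (σ (x, y')) y' := by
  intro ys h0 hleg
  have hzleg : ∀ t : ℕ, (fun t => Nat.rec y' (fun s _ => ys s) t) (t+1)
      ∈ nbhd G ((fun t => Nat.rec y' (fun s _ => ys s) t) t) := by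
    intro t
    cases t with
    | zero => exact h0
    | succ s => exact hleg s
  obtain ⟨t, ht, hcap⟩ := hg (fun t => Nat.rec (motive := fun _ => V) y' (fun s _ => ys s) t) hy' hzleg
  rcases t with _ | s
  · exact absurd hcap hne
  · refine ⟨s, by omega, ?_⟩
    rw [← copSeq_shift σ x y' ys (s+1)]
    exact hcap

/-- One round of the concurrent game, extending a history. -/
def ext1 (πC πR : Strat V) (init : V × V) (h : List (V × V)) : PMF (List (V × V)) :=
  (πC h).bind fun u => (πR h).bind fun w =>
    PMF.pure (h ++ [step1 G (h.getLast?.getD init) u w])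

/-- The distribution over histories after `j` more rounds, starting from history `h`. -/
def playFrom (πC πR : Strat V) (init : V × V) : ℕ → List (V × V) → PMF (List (V × V))
  | 0, h => PMF.pure h
  | (j+1), h => (ext1 G πC πR init h).bind (playFrom πC πR init j)

/-- The set of histories in which the robber is still free. -/
def freeS (init : V × V) : Set (List (V × V)) :=
  {h | (h.getLast?.getD init).1 ≠ (h.getLast?.getD init).2}

lemma freeProb1_eq (πC πR : Strat V) (init : V × V) (t : ℕ) :
    freeProb1 G πC πR init t = (play1 G πC πR init t).toOuterMeasure (freeS init) := rfl

lemma toOM_le_one {α : Type*} (p : PMF α) (s : Set α) : p.toOuterMeasure s ≤ 1 := by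
  rw [PMF.toOuterMeasure_apply, ← PMF.tsum_coe p]
  exact ENNReal.tsum_le_tsum fun h => Set.indicator_apply_le fun _ => le_rfl

lemma play1_add (πC πR : Strat V) (init : V × V) (j : ℕ) :
    ∀ t, play1 G πC πR init (t + j) =
      (play1 G πC πR init t).bind (playFrom G πC πR init j) := by
  induction j with
  | zero => intro t; exact (PMF.bind_pure _).symm
  | succ j ih =>
      intro t
      rw [show t + (j+1) = (t+1) + j from by omega, ih (t+1)]
      show ((play1 G πC πR init t).bind (ext1 G πC πR init)).bind (playFrom G πC πR init j) = _
      rw [PMF.bind_bind]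
      rfl

lemma ext1_mem (πC πR : Strat V) (init : V × V) (h h' : List (V × V))
    (hz : ext1 G πC πR init h h' ≠ 0) :
    ∃ u w, h' = h ++ [step1 G (h.getLast?.getD init) u w] := by
  have hm : h' ∈ (ext1 G πC πR init h).support := (PMF.mem_support_iff _ _).mpr hz
  simp only [ext1, PMF.support_bind, PMF.support_pure, Set.mem_iUnion,
    Set.mem_singleton_iff, exists_prop] at hm
  obtain ⟨u, -, w, -, rfl⟩ := hm
  exact ⟨u, w, rfl⟩

lemma playFrom_captured (πC πR : Strat V) (init : V × V) :
    ∀ (j : ℕ) (h : List (V × V)),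
      (h.getLast?.getD init).1 = (h.getLast?.getD init).2 →
      (playFrom G πC πR init j h).toOuterMeasure (freeS init) = 0 := by
  intro j
  induction j with
  | zero =>
      intro h hc
      rw [show playFrom G πC πR init 0 h = PMF.pure h from rfl, PMF.toOuterMeasure_pure_apply,
        if_neg]
      exact fun hmem => hmem hc
  | succ j ih =>
      intro h hc
      rw [show playFrom G πC πR init (j+1) h
            = (ext1 G πC πR init h).bind (playFrom G πC πR init j) from rfl,
        PMF.toOuterMeasure_bind_apply]
      refine ENNReal.tsum_eq_zero.mpr fun h' => ?_
      by_cases hz : ext1 G πC πR init h h' = 0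
      · rw [hz, zero_mul]
      · obtain ⟨u, w, rfl⟩ := ext1_mem G πC πR init h h' hz
        have hstep : step1 G (h.getLast?.getD init) u w = h.getLast?.getD init := by
          simp only [step1]
          rw [if_pos hc]
        have h0 : (playFrom G πC πR init j
            (h ++ [step1 G (h.getLast?.getD init) u w])).toOuterMeasure (freeS init) = 0 := by
          apply ih
          rw [List.getLast?_concat, Option.getD_some, hstep]
          exact hc
        rw [h0, mul_zero]

lemma play1_getLast (πC πR : Strat V) (init : V × V) :
    ∀ (t : ℕ) (h : List (V × V)), play1 G πC πR init t h ≠ 0 →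
      ∃ p, h.getLast? = some p := by
  intro t
  induction t with
  | zero =>
      intro h hz
      have hm : h ∈ (PMF.pure [init] : PMF (List (V × V))).support := (PMF.mem_support_iff _ _).mpr hz
      rw [PMF.support_pure, Set.mem_singleton_iff] at hm
      subst hm
      exact ⟨init, rfl⟩
  | succ t ih =>
      intro h hz
      have hz' : ((play1 G πC πR init t).bind (ext1 G πC πR init)) h ≠ 0 := hz
      have hm : h ∈ ((play1 G πC πR init t).bind (ext1 G πC πR init)).support :=
        (PMF.mem_support_iff _ _).mpr hz'
      rw [PMF.support_bind] at hm
      simp only [Set.mem_iUnion, exists_prop] at hm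
      obtain ⟨g, -, hg⟩ := hm
      obtain ⟨u, w, rfl⟩ := ext1_mem G πC πR init g h ((PMF.mem_support_iff _ _).mp hg)
      exact ⟨_, List.getLast?_concat⟩

lemma piCSharp_apply [Nonempty V] (σ : V × V → V) (h : List (V × V)) (x y : V)
    (hh : h.getLast? = some (x, y)) :
    piCSharp G σ h =
      (PMF.uniformOfFinset (nbhd G y) (nbhd_nonempty G y)).map fun v => σ (x, v) := by
  simp only [piCSharp, hh]

lemma playFrom_succ_piC [Nonempty V] (σ : V × V → V) (πR : Strat V) (init : V × V) (j : ℕ)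
    (h : List (V × V)) (x y : V) (hh : h.getLast? = some (x, y)) :
    playFrom G (piCSharp G σ) πR init (j+1) h =
      (PMF.uniformOfFinset (nbhd G y) (nbhd_nonempty G y)).bind fun v =>
        (πR h).bind fun w =>
          playFrom G (piCSharp G σ) πR init j (h ++ [step1 G (x, y) (σ (x, v)) w]) := by
  show (ext1 G (piCSharp G σ) πR init h).bind (playFrom G (piCSharp G σ) πR init j) = _
  simp only [ext1, piCSharp_apply G σ h x y hh, hh, Option.getD_some, PMF.map,
    PMF.bind_bind, PMF.pure_bind, Function.comp]

lemma pmf_swap_bound {α β : Type*} (U : PMF α) (ρ : PMF β) (F : α → β → ENNReal)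
    (B : ENNReal) (hinner : ∀ w, (∑' v, U v * F v w) ≤ B) :
    (∑' v, U v * ∑' w, ρ w * F v w) ≤ B := by
  calc (∑' v, U v * ∑' w, ρ w * F v w)
      = ∑' v, ∑' w, U v * (ρ w * F v w) := tsum_congr fun v => ENNReal.tsum_mul_left.symm
    _ = ∑' w, ∑' v, U v * (ρ w * F v w) := ENNReal.tsum_comm
    _ = ∑' w, ρ w * ∑' v, U v * F v w := by
        refine tsum_congr fun w => ?_
        rw [← ENNReal.tsum_mul_left]
        exact tsum_congr fun v => by ring
    _ ≤ ∑' w, ρ w * B := ENNReal.tsum_le_tsum fun w => mul_le_mul_right (hinner w) _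
    _ = (∑' w, ρ w) * B := ENNReal.tsum_mul_right
    _ = B := by rw [PMF.tsum_coe, one_mul]

lemma uniform_step_bound {α : Type*} (s : Finset α) (hs : s.Nonempty)
    (φ : α → ENNReal) (w' : α) (hw' : w' ∈ s) (hφ : ∀ v, φ v ≤ 1)
    (a c : ENNReal) (ha : a ≤ 1) (hca : c ≤ ((s.card : ENNReal))⁻¹)
    (hφw' : φ w' ≤ 1 - a) :
    (∑' v, (PMF.uniformOfFinset s hs) v * φ v) ≤ 1 - c * a := by
  classical
  set U := PMF.uniformOfFinset s hs with hUdef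
  have hU : U w' = ((s.card : ENNReal))⁻¹ := by
    rw [hUdef, PMF.uniformOfFinset_apply, if_pos hw']
  refine ENNReal.le_sub_of_add_le_right (ne_top_of_le_ne_top ENNReal.one_ne_top
    (mul_le_one' (hca.trans (ENNReal.inv_le_one.mpr (by exact_mod_cast hs.card_pos))) ha)) ?_
  rw [ENNReal.tsum_eq_add_tsum_ite w', add_right_comm]
  have h1 : U w' * φ w' + c * a ≤ U w' := by
    calc U w' * φ w' + c * a
        ≤ U w' * (1 - a) + U w' * a := by
          refine add_le_add (mul_le_mul_right hφw' _) (mul_le_mul_left ?_ a)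
          rw [hU]; exact hca
      _ = U w' * ((1 - a) + a) := (mul_add _ _ _).symm
      _ = U w' := by rw [tsub_add_cancel_of_le ha, mul_one]
  have h2 : (∑' v, if v = w' then 0 else U v * φ v) ≤ ∑' v, (if v = w' then 0 else U v) :=
    ENNReal.tsum_le_tsum fun v => by
      split
      · exact le_rfl
      · calc U v * φ v ≤ U v * 1 := mul_le_mul_right (hφ v) _
          _ = U v := mul_one _
  refine le_trans (add_le_add h1 h2) (le_of_eq ?_)
  rw [← ENNReal.tsum_eq_add_tsum_ite w']
  exact U.tsum_coe

lemma key_bound [Nonempty V] (σ : V × V → V) (hσ : ∀ x y : V, σ (x, y) ∈ nbhd G x)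
    (πR : Strat V) (init : V × V) :
    ∀ (j : ℕ) (h : List (V × V)) (x y : V), h.getLast? = some (x, y) → x ≠ y →
      GoodCop G σ j x y →
      (playFrom G (piCSharp G σ) πR init j h).toOuterMeasure (freeS init) ≤
        1 - ((Fintype.card V : ENNReal))⁻¹ ^ j := by
  intro j
  induction j with
  | zero => intro h x y hh hxy hg; exact absurd hg (goodCop_zero_false G σ x y)
  | succ j ih =>
      intro h x y hh hxy hg
      have hc1 : ((Fintype.card V : ENNReal))⁻¹ ≤ 1 :=
        ENNReal.inv_le_one.mpr (by exact_mod_cast Fintype.card_pos)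
      rw [playFrom_succ_piC G σ πR init j h x y hh, PMF.toOuterMeasure_bind_apply]
      simp only [PMF.toOuterMeasure_bind_apply]
      refine pmf_swap_bound (PMF.uniformOfFinset (nbhd G y) (nbhd_nonempty G y)) (πR h)
        (fun v w => (playFrom G (piCSharp G σ) πR init j
          (h ++ [step1 G (x, y) (σ (x, v)) w])).toOuterMeasure (freeS init)) _
        (fun w => ?_)
      set w' : V := if w ∈ nbhd G y then w else y with hw'def
      have hw' : w' ∈ nbhd G y := by
        by_cases hmem : w ∈ nbhd G y
        · rw [hw'def, if_pos hmem]; exact hmem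
        · rw [hw'def, if_neg hmem]; exact Finset.mem_insert_self _ _
      have hstep : step1 G (x, y) (σ (x, w')) w =
          if σ (x, w') = y ∧ w' = x then (σ (x, w'), σ (x, w')) else (σ (x, w'), w') := by
        simp only [step1]
        rw [if_neg hxy]
        have hσw := hσ x w'
        simp only [hw'def] at hσw ⊢
        simp only [hσw, if_pos]
      have hfree : (playFrom G (piCSharp G σ) πR init j
          (h ++ [step1 G (x, y) (σ (x, w')) w])).toOuterMeasure (freeS init) ≤
          1 - ((Fintype.card V : ENNReal))⁻¹ ^ j := by
        rw [hstep]
        by_cases hep : σ (x, w') = y ∧ w' = x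
        · rw [if_pos hep]
          rw [playFrom_captured G (piCSharp G σ) πR init j _
            (by rw [List.getLast?_concat, Option.getD_some])]
          exact zero_le'
        · rw [if_neg hep]
          by_cases hcap : σ (x, w') = w'
          · rw [playFrom_captured G (piCSharp G σ) πR init j _
              (by rw [List.getLast?_concat, Option.getD_some]; exact hcap)]
            exact zero_le'
          · exact ih (h ++ [(σ (x, w'), w')]) (σ (x, w')) w' (List.getLast?_concat)
              hcap (goodCop_step G σ hg hw' hcap)
      have := uniform_step_bound (nbhd G y) (nbhd_nonempty G y)
        (fun v => (playFrom G (piCSharp G σ) πR init j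
          (h ++ [step1 G (x, y) (σ (x, v)) w])).toOuterMeasure (freeS init)) w' hw'
        (fun v => toOM_le_one _ _) (((Fintype.card V : ENNReal))⁻¹ ^ j)
        ((Fintype.card V : ENNReal))⁻¹ (pow_le_one' hc1 j)
        (ENNReal.inv_le_inv' (by exact_mod_cast Finset.card_le_univ _)) hfree
      rw [← pow_succ'] at this
      exact this

lemma freeProb1_add_le (πC πR : Strat V) (init : V × V) (t j : ℕ) :
    freeProb1 G πC πR init (t + j) ≤ freeProb1 G πC πR init t := by
  rw [freeProb1_eq, freeProb1_eq, play1_add G πC πR init j t, PMF.toOuterMeasure_bind_apply,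
    PMF.toOuterMeasure_apply (play1 G πC πR init t)]
  refine ENNReal.tsum_le_tsum fun h => ?_
  by_cases hf : h ∈ freeS init
  · rw [Set.indicator_of_mem hf]
    calc play1 G πC πR init t h * _ ≤ play1 G πC πR init t h * 1 :=
          mul_le_mul_right (toOM_le_one _ _) _
      _ = _ := mul_one _
  · rw [Set.indicator_of_notMem hf, playFrom_captured G πC πR init j h (not_not.mp hf),
      mul_zero]

lemma freeProb1_step [Nonempty V] (σ : V × V → V) (hσ : ∀ x y : V, σ (x, y) ∈ nbhd G x)
    (T : ℕ) (hTT : ∀ x y : V, GoodCop G σ T x y) (πR : Strat V) (init : V × V) (t : ℕ) :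
    freeProb1 G (piCSharp G σ) πR init (t + T) ≤
      (1 - ((Fintype.card V : ENNReal))⁻¹ ^ T) * freeProb1 G (piCSharp G σ) πR init t := by
  rw [freeProb1_eq, freeProb1_eq, play1_add G _ πR init T t, PMF.toOuterMeasure_bind_apply,
    PMF.toOuterMeasure_apply (play1 G (piCSharp G σ) πR init t), ← ENNReal.tsum_mul_left]
  refine ENNReal.tsum_le_tsum fun h => ?_
  by_cases hz : play1 G (piCSharp G σ) πR init t h = 0
  · rw [hz, zero_mul]
    exact zero_le'
  by_cases hf : h ∈ freeS init
  · obtain ⟨⟨x, y⟩, hp⟩ := play1_getLast G (piCSharp G σ) πR init t h hz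
    have hxy : x ≠ y := by
      have h12 : (h.getLast?.getD init).1 ≠ (h.getLast?.getD init).2 := hf
      rw [hp, Option.getD_some] at h12
      exact h12
    calc play1 G (piCSharp G σ) πR init t h *
          (playFrom G (piCSharp G σ) πR init T h).toOuterMeasure (freeS init)
        ≤ play1 G (piCSharp G σ) πR init t h * (1 - ((Fintype.card V : ENNReal))⁻¹ ^ T) :=
          mul_le_mul_right (key_bound G σ hσ πR init T h x y hp hxy (hTT x y)) _
      _ = (1 - ((Fintype.card V : ENNReal))⁻¹ ^ T) * (freeS init).indicator
            (⇑(play1 G (piCSharp G σ) πR init t)) h := by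
          rw [Set.indicator_of_mem hf, mul_comm]
  · rw [Set.indicator_of_notMem hf, playFrom_captured G _ πR init T h (not_not.mp hf),
      mul_zero, mul_zero]

lemma freeProb1_pow [Nonempty V] (σ : V × V → V) (hσ : ∀ x y : V, σ (x, y) ∈ nbhd G x)
    (T : ℕ) (hTT : ∀ x y : V, GoodCop G σ T x y) (πR : Strat V) (init : V × V) (k : ℕ) :
    freeProb1 G (piCSharp G σ) πR init (k * T) ≤
      (1 - ((Fintype.card V : ENNReal))⁻¹ ^ T) ^ k := by
  induction k with
  | zero =>
      rw [zero_mul, pow_zero, freeProb1_eq]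
      exact toOM_le_one _ _
  | succ k ih =>
      rw [show (k+1) * T = k * T + T from by ring]
      calc freeProb1 G (piCSharp G σ) πR init (k * T + T)
          ≤ (1 - ((Fintype.card V : ENNReal))⁻¹ ^ T) *
            freeProb1 G (piCSharp G σ) πR init (k * T) :=
            freeProb1_step G σ hσ T hTT πR init (k * T)
        _ ≤ (1 - ((Fintype.card V : ENNReal))⁻¹ ^ T) *
            (1 - ((Fintype.card V : ENNReal))⁻¹ ^ T) ^ k := mul_le_mul_right ih _
        _ = (1 - ((Fintype.card V : ENNReal))⁻¹ ^ T) ^ (k+1) := (pow_succ' _ _).symm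

end AuxProof

/-- if the positional cop strategy `σ` guarantees capture within `T`
rounds in the turn-based game, then there is a finite constant `M` (depending only on
`G` and `T`) such that, under the memoryless randomized strategy `π_C^#`, the expected
capture time from every initial position and against every robber strategy is at most
`Σ_{k=1}^∞ k·T·(1 − (1/n)^T)^k ≤ M < ∞`, where `n = |V|`. -/
theorem payoff_piCSharp_bounded (G : SimpleGraph V) [DecidableRel G.Adj] [Nonempty V]
    (hconn : G.Connected) (σ : V × V → V) (hσ : ∀ x y : V, σ (x, y) ∈ nbhd G x) (T : ℕ)
    (hT : ∀ (x₀ : V) (ys : ℕ → V), (∀ t, ys (t+1) ∈ nbhd G (ys t)) →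
      ∃ t < T, copSeq σ x₀ ys (t+1) = ys t) :
    ∃ M : ENNReal, M < ⊤ ∧
      (∑' k : ℕ, (k : ENNReal) * (T : ENNReal) *
          (1 - ((Fintype.card V : ENNReal))⁻¹ ^ T) ^ k) ≤ M ∧
      ∀ (πR : Strat V) (init : V × V),
        payoff G (piCSharp G σ) πR init ≤
          ∑' k : ℕ, (k : ENNReal) * (T : ENNReal) *
            (1 - ((Fintype.card V : ENNReal))⁻¹ ^ T) ^ k := by
  classical
  rcases Nat.eq_zero_or_pos T with hT0 | hT0
  · exfalso
    obtain ⟨x⟩ := (inferInstance : Nonempty V)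
    obtain ⟨t, ht, -⟩ := hT x (fun _ => x) (fun _ => Finset.mem_insert_self _ _)
    omega
  have hgood : ∀ x y : V, GoodCop G σ T x y := fun x y ys _ hleg => hT x ys hleg
  have hn1 : 1 ≤ Fintype.card V := Fintype.card_pos
  rcases le_or_gt 2 (Fintype.card V) with hn2 | hlt
  · -- at least two vertices
    have hnr2 : (2:ℝ) ≤ ((Fintype.card V : ℝ)) := by exact_mod_cast hn2
    have hnrpos : (0:ℝ) < ((Fintype.card V : ℝ)) := by linarith
    set qr : ℝ := (((Fintype.card V : ℝ))⁻¹) ^ T with hqr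
    have hqr0 : 0 < qr := pow_pos (inv_pos.mpr hnrpos) T
    have hinvhalf : ((Fintype.card V : ℝ))⁻¹ ≤ 1/2 := by
      have := inv_anti₀ (by norm_num : (0:ℝ) < 2) hnr2
      linarith [this]
    have hqrhalf : qr ≤ 1/2 := by
      have h1 : qr ≤ (((Fintype.card V : ℝ))⁻¹) ^ 1 :=
        pow_le_pow_of_le_one (inv_nonneg.mpr hnrpos.le) (by linarith) hT0
      rw [pow_one] at h1
      linarith
    set rr : ℝ := 1 - qr with hrr
    have hrr0 : 0 ≤ rr := by rw [hrr]; linarith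
    have hrr1 : rr < 1 := by rw [hrr]; linarith
    have hrrn : ‖rr‖ < 1 := by rw [Real.norm_eq_abs, abs_of_nonneg hrr0]; exact hrr1
    have hcq : ((Fintype.card V : ENNReal))⁻¹ ^ T = ENNReal.ofReal qr := by
      rw [hqr, ENNReal.ofReal_pow (inv_nonneg.mpr hnrpos.le),
        ENNReal.ofReal_inv_of_pos hnrpos, ENNReal.ofReal_natCast]
    have hrE : 1 - ((Fintype.card V : ENNReal))⁻¹ ^ T = ENNReal.ofReal rr := by
      rw [hcq, hrr, ENNReal.ofReal_sub 1 hqr0.le, ENNReal.ofReal_one]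
    have hsummable : Summable (fun k : ℕ => (k:ℝ) * (T:ℝ) * rr ^ k) := by
      have h := summable_pow_mul_geometric_of_norm_lt_one 1 hrrn
      refine (h.mul_left (T:ℝ)).congr fun k => ?_
      ring
    have hRHSsum : (∑' k : ℕ, (k : ENNReal) * (T : ENNReal) *
        (1 - ((Fintype.card V : ENNReal))⁻¹ ^ T) ^ k)
        = ENNReal.ofReal (∑' k : ℕ, (k:ℝ) * (T:ℝ) * rr ^ k) := by
      rw [ENNReal.ofReal_tsum_of_nonneg
        (fun k => mul_nonneg (mul_nonneg (Nat.cast_nonneg k) (Nat.cast_nonneg T))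
          (pow_nonneg hrr0 k)) hsummable]
      refine tsum_congr fun k => ?_
      rw [hrE, ENNReal.ofReal_mul (mul_nonneg (Nat.cast_nonneg k) (Nat.cast_nonneg T)),
        ENNReal.ofReal_mul (Nat.cast_nonneg k), ENNReal.ofReal_pow hrr0,
        ENNReal.ofReal_natCast, ENNReal.ofReal_natCast]
    have hrsum : (∑' k : ℕ, (k:ℝ) * (T:ℝ) * rr ^ k) = (T:ℝ) * (rr / (1 - rr)^2) := by
      calc (∑' k : ℕ, (k:ℝ) * (T:ℝ) * rr ^ k)
          = ∑' k : ℕ, (T:ℝ) * ((k:ℝ) * rr ^ k) := tsum_congr fun k => by ring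
        _ = (T:ℝ) * ∑' k : ℕ, (k:ℝ) * rr ^ k := tsum_mul_left
        _ = (T:ℝ) * (rr / (1-rr)^2) := by rw [tsum_coe_mul_geometric_of_norm_lt_one hrrn]
    refine ⟨ENNReal.ofReal (∑' k : ℕ, (k:ℝ) * (T:ℝ) * rr ^ k), ENNReal.ofReal_lt_top,
      le_of_eq hRHSsum, ?_⟩
    intro πR init
    rw [hRHSsum]
    have hc1 : ((Fintype.card V : ENNReal))⁻¹ ≤ 1 :=
      ENNReal.inv_le_one.mpr (by exact_mod_cast hn1)
    haveI : NeZero T := ⟨hT0.ne'⟩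
    set r : ENNReal := 1 - ((Fintype.card V : ENNReal))⁻¹ ^ T with hrdef
    have hFP : ∀ (p : ℕ × Fin T),
        freeProb1 G (piCSharp G σ) πR init ((Nat.divModEquiv T).symm p) ≤ r ^ p.1 := by
      intro p
      have h1 : (Nat.divModEquiv T).symm p = p.1 * T + (p.2 : ℕ) := rfl
      rw [h1]
      exact le_trans (freeProb1_add_le G _ πR init (p.1 * T) (p.2:ℕ))
        (freeProb1_pow G σ hσ T hgood πR init p.1)
    calc payoff G (piCSharp G σ) πR init
        = ∑' t, freeProb1 G (piCSharp G σ) πR init t := rfl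
      _ = ∑' p : ℕ × Fin T, freeProb1 G (piCSharp G σ) πR init ((Nat.divModEquiv T).symm p) :=
          ((Nat.divModEquiv T).symm.tsum_eq _).symm
      _ ≤ ∑' p : ℕ × Fin T, r ^ p.1 := ENNReal.tsum_le_tsum hFP
      _ = ∑' k : ℕ, ∑' j : Fin T, r ^ k := ENNReal.tsum_prod (f := fun k (_ : Fin T) => r ^ k)
      _ = ∑' k : ℕ, (T : ENNReal) * r ^ k := by
          refine tsum_congr fun k => ?_
          rw [tsum_fintype]
          simp [Finset.sum_const, Finset.card_univ, nsmul_eq_mul]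
      _ = (T : ENNReal) * ∑' k : ℕ, r ^ k := ENNReal.tsum_mul_left
      _ = (T : ENNReal) * (1 - r)⁻¹ := by rw [ENNReal.tsum_geometric]
      _ = (T : ENNReal) * (((Fintype.card V : ENNReal))⁻¹ ^ T)⁻¹ := by
          rw [hrdef, ENNReal.sub_sub_cancel ENNReal.one_ne_top (pow_le_one' hc1 T)]
      _ = ENNReal.ofReal ((T:ℝ) * qr⁻¹) := by
          rw [ENNReal.ofReal_mul (Nat.cast_nonneg T), ENNReal.ofReal_natCast,
            ENNReal.ofReal_inv_of_pos hqr0, hcq]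
      _ ≤ ENNReal.ofReal (∑' k : ℕ, (k:ℝ) * (T:ℝ) * rr ^ k) := by
          refine ENNReal.ofReal_le_ofReal ?_
          rw [hrsum]
          have hq_eq : 1 - rr = qr := by rw [hrr]; ring
          rw [hq_eq]
          have hqrr : qr ≤ rr := by rw [hrr]; linarith
          have e1 : qr⁻¹ = qr / qr^2 := by
            rw [pow_two, ← div_div, div_self hqr0.ne', one_div]
          calc (T:ℝ) * qr⁻¹ = (T:ℝ) * (qr / qr^2) := by rw [e1]
            _ ≤ (T:ℝ) * (rr / qr^2) := by
                refine mul_le_mul_of_nonneg_left ?_ (Nat.cast_nonneg T)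
                gcongr
  · -- one vertex
    have hcard1 : Fintype.card V = 1 := by omega
    haveI : Subsingleton V := Fintype.card_le_one_iff_subsingleton.mp (le_of_eq hcard1)
    have hS : (∑' k : ℕ, (k : ENNReal) * (T : ENNReal) *
        (1 - ((Fintype.card V : ENNReal))⁻¹ ^ T) ^ k) = 0 := by
      have hr0 : (1 : ENNReal) - ((Fintype.card V : ENNReal))⁻¹ ^ T = 0 := by
        rw [hcard1]; simp
      rw [hr0]
      refine ENNReal.tsum_eq_zero.mpr fun k => ?_
      cases k with
      | zero => simp
      | succ m => simp [pow_succ]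
    refine ⟨0, ENNReal.zero_lt_top, le_of_eq hS, ?_⟩
    intro πR init
    have hpay : payoff G (piCSharp G σ) πR init = 0 := by
      show (∑' t : ℕ, freeProb1 G (piCSharp G σ) πR init t) = 0
      refine ENNReal.tsum_eq_zero.mpr fun t => ?_
      rw [freeProb1_eq, PMF.toOuterMeasure_apply]
      refine ENNReal.tsum_eq_zero.mpr fun h => ?_
      refine Set.indicator_of_notMem (fun hmem => ?_) _
      exact (hmem : (h.getLast?.getD init).1 ≠ (h.getLast?.getD init).2)
        (Subsingleton.elim _ _)
    rw [hpay]
    exact zero_le'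
end
end

section
/- Let G be the complete graph K₃ on three vertices, and consider the single-cop concurrent cops and robber game on G. Let π* denote the memoryless randomized strategy under which, from any position (x,y) with x ≠ y, a player at vertex z moves with probability 1/2 to each of the two vertices different from z. Then: (a) if both players use π*, the expected capture time from every initial position (x,y) with x ≠ y equals 2; and (b) these strategies are optimal, i.e., the value of the game satisfies v̂_{(x,y)} = 2 for every (x,y) with x ≠ y (and v̂_{(x,x)} = 0 for every x). -/
open Finset Filter

noncomputable section

variable {V : Type*} [Fintype V] [DecidableEq V]

/-- The complete graph `K₃` on three vertices. -/
def K3 : SimpleGraph (Fin 3) := ⊤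

instance : DecidableRel K3.Adj := fun a b => inferInstanceAs (Decidable (a ≠ b))

/-- The uniform distribution on the two vertices of `K₃` different from `z`. -/
def unifNot (z : Fin 3) : PMF (Fin 3) :=
  PMF.uniformOfFinset ({z}ᶜ : Finset (Fin 3))
    (by rw [← Finset.card_pos, Finset.card_compl]; simp)

/-- The memoryless strategy `π*` for the cop: from a position `(x, y)` with `x ≠ y`,
move with probability `1/2` to each of the two vertices different from the cop's
current vertex `x` (after capture the move is irrelevant: the position is absorbing). -/
def piStarC : Strat (Fin 3) := fun h =>
  match h.getLast? with
  | some p => if p.1 = p.2 then PMF.pure p.1 else unifNot p.1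
  | none => PMF.pure 0

/-- The memoryless strategy `π*` for the robber: from a position `(x, y)` with
`x ≠ y`, move with probability `1/2` to each of the two vertices different from the
robber's current vertex `y`. -/
def piStarR : Strat (Fin 3) := fun h =>
  match h.getLast? with
  | some p => if p.1 = p.2 then PMF.pure p.2 else unifNot p.2
  | none => PMF.pure 0

lemma mem_nbhd_K3 (u w : Fin 3) : w ∈ nbhd K3 u := by
  simp only [nbhd, K3, Finset.mem_insert, SimpleGraph.mem_neighborFinset, SimpleGraph.top_adj]
  by_cases h : w = u
  · exact Or.inl h
  · right; show w ∈ K3.neighborFinset u; rw [SimpleGraph.mem_neighborFinset]; exact Ne.symm h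

lemma step1_K3 (q : Fin 3 × Fin 3) (u w : Fin 3) :
    step1 K3 q u w = if q.1 = q.2 then q else if u = q.2 ∧ w = q.1 then (u, u) else (u, w) := by
  simp [step1, mem_nbhd_K3]

lemma offdiag_step (x y u w : Fin 3) (hxy : x ≠ y) :
    ((step1 K3 (x, y) u w).1 ≠ (step1 K3 (x, y) u w).2) ↔ (¬(u = y ∧ w = x) ∧ u ≠ w) := by
  rw [step1_K3]
  simp only [hxy, if_false]
  by_cases h : u = y ∧ w = x <;> simp [h]

lemma inner_cop (x y w : Fin 3) (hxy : x ≠ y) :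
    ∑ u : Fin 3, unifNot x u *
      (if ¬(u = y ∧ w = x) ∧ u ≠ w then (1 : ENNReal) else 0) = 2⁻¹ := by
  have hc : ({x}ᶜ : Finset (Fin 3)).card = 2 := by
    rw [Finset.card_compl]; simp
  simp only [unifNot, PMF.uniformOfFinset_apply, hc, Fin.sum_univ_three, Finset.mem_compl,
    Finset.mem_singleton]
  fin_cases x <;> fin_cases y <;> fin_cases w <;> simp_all

lemma inner_rob (x y u : Fin 3) (hxy : x ≠ y) :
    ∑ w : Fin 3, unifNot y w *
      (if ¬(u = y ∧ w = x) ∧ u ≠ w then (1 : ENNReal) else 0) = 2⁻¹ := by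
  have hc : ({y}ᶜ : Finset (Fin 3)).card = 2 := by
    rw [Finset.card_compl]; simp
  simp only [unifNot, PMF.uniformOfFinset_apply, hc, Fin.sum_univ_three, Finset.mem_compl,
    Finset.mem_singleton]
  fin_cases x <;> fin_cases y <;> fin_cases u <;> simp_all

lemma core_cop (x y : Fin 3) (hxy : x ≠ y) (μ : PMF (Fin 3)) :
    ∑' u : Fin 3, unifNot x u * ∑' w : Fin 3, μ w *
      (if (step1 K3 (x, y) u w).1 ≠ (step1 K3 (x, y) u w).2 then (1 : ENNReal) else 0)
      = 2⁻¹ := by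
  simp only [tsum_fintype]
  have : ∀ u w, (if (step1 K3 (x, y) u w).1 ≠ (step1 K3 (x, y) u w).2 then (1 : ENNReal) else 0)
      = (if ¬(u = y ∧ w = x) ∧ u ≠ w then (1 : ENNReal) else 0) := by
    intro u w
    simp only [offdiag_step x y u w hxy]
  simp only [this]
  calc ∑ u : Fin 3, unifNot x u * ∑ w : Fin 3, μ w *
        (if ¬(u = y ∧ w = x) ∧ u ≠ w then (1 : ENNReal) else 0)
      = ∑ w : Fin 3, μ w * ∑ u : Fin 3, unifNot x u *
        (if ¬(u = y ∧ w = x) ∧ u ≠ w then (1 : ENNReal) else 0) := by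
        simp only [Finset.mul_sum]
        rw [Finset.sum_comm]
        congr 1; ext u; congr 1; ext w; ring
    _ = ∑ w : Fin 3, μ w * 2⁻¹ := by
        congr 1; ext w; rw [inner_cop x y w hxy]
    _ = 2⁻¹ := by
        rw [← Finset.sum_mul]
        have := PMF.tsum_coe μ
        rw [tsum_fintype] at this
        rw [this, one_mul]

lemma core_rob (x y : Fin 3) (hxy : x ≠ y) (μ : PMF (Fin 3)) :
    ∑' u : Fin 3, μ u * ∑' w : Fin 3, unifNot y w *
      (if (step1 K3 (x, y) u w).1 ≠ (step1 K3 (x, y) u w).2 then (1 : ENNReal) else 0)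
      = 2⁻¹ := by
  simp only [tsum_fintype]
  have : ∀ u w, (if (step1 K3 (x, y) u w).1 ≠ (step1 K3 (x, y) u w).2 then (1 : ENNReal) else 0)
      = (if ¬(u = y ∧ w = x) ∧ u ≠ w then (1 : ENNReal) else 0) := by
    intro u w
    simp only [offdiag_step x y u w hxy]
  simp only [this]
  calc ∑ u : Fin 3, μ u * ∑ w : Fin 3, unifNot y w *
        (if ¬(u = y ∧ w = x) ∧ u ≠ w then (1 : ENNReal) else 0)
      = ∑ u : Fin 3, μ u * 2⁻¹ := by
        congr 1; ext u; rw [inner_rob x y u hxy]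
    _ = 2⁻¹ := by
        rw [← Finset.sum_mul]
        have := PMF.tsum_coe μ
        rw [tsum_fintype] at this
        rw [this, one_mul]

lemma play1_support (G : SimpleGraph V) [DecidableRel G.Adj] (πC πR : Strat V)
    (init : V × V) (t : ℕ) (h : List (V × V)) (hh : h ∈ (play1 G πC πR init t).support) :
    ∃ p, h.getLast? = some p := by
  induction t generalizing h with
  | zero =>
    simp only [play1, PMF.support_pure, Set.mem_singleton_iff] at hh
    exact ⟨init, by simp [hh]⟩
  | succ t ih =>
    simp only [play1, PMF.support_bind, Set.mem_iUnion, PMF.support_pure,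
      Set.mem_singleton_iff] at hh
    obtain ⟨h', _, u, _, w, _, rfl⟩ := hh
    exact ⟨_, List.getLast?_concat⟩

lemma freeProb1_succ (πC πR : Strat (Fin 3)) (init : Fin 3 × Fin 3) (t : ℕ) :
    freeProb1 K3 πC πR init (t + 1) =
      ∑' h : List (Fin 3 × Fin 3), (play1 K3 πC πR init t) h *
        ∑' u : Fin 3, πC h u * ∑' w : Fin 3, πR h w *
          (if (step1 K3 (h.getLast?.getD init) u w).1 ≠
              (step1 K3 (h.getLast?.getD init) u w).2 then (1 : ENNReal) else 0) := by
  rw [freeProb1]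
  show ((play1 K3 πC πR init t).bind _).toOuterMeasure _ = _
  rw [PMF.toOuterMeasure_bind_apply]
  refine tsum_congr fun h => ?_
  congr 1
  rw [PMF.toOuterMeasure_bind_apply]
  refine tsum_congr fun u => ?_
  congr 1
  rw [PMF.toOuterMeasure_bind_apply]
  refine tsum_congr fun w => ?_
  congr 1
  rw [PMF.toOuterMeasure_pure_apply]
  congr 1
  simp [Set.mem_setOf_eq, List.getLast?_concat]

lemma freeProb1_eq_tsum (πC πR : Strat (Fin 3)) (init : Fin 3 × Fin 3) (t : ℕ) :
    freeProb1 K3 πC πR init t = ∑' h : List (Fin 3 × Fin 3),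
      (if (h.getLast?.getD init).1 ≠ (h.getLast?.getD init).2 then
        (play1 K3 πC πR init t) h else 0) := by
  rw [freeProb1, PMF.toOuterMeasure_apply]
  refine tsum_congr fun h => ?_
  rw [Set.indicator_apply]
  simp [Set.mem_setOf_eq]

lemma free_copStar (πR : Strat (Fin 3)) (init : Fin 3 × Fin 3) (hinit : init.1 ≠ init.2)
    (t : ℕ) : freeProb1 K3 piStarC πR init t = 2⁻¹ ^ t := by
  induction t with
  | zero =>
    rw [freeProb1_eq_tsum]
    rw [show (play1 K3 piStarC πR init 0) = PMF.pure [init] from rfl]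
    rw [tsum_eq_single [init]]
    · simp [hinit]
    · intro h hne
      simp [PMF.pure_apply, hne]
  | succ t ih =>
    rw [freeProb1_succ]
    have key : ∀ h : List (Fin 3 × Fin 3), (play1 K3 piStarC πR init t) h *
        (∑' u : Fin 3, piStarC h u * ∑' w : Fin 3, πR h w *
          (if (step1 K3 (h.getLast?.getD init) u w).1 ≠
              (step1 K3 (h.getLast?.getD init) u w).2 then (1 : ENNReal) else 0)) =
        2⁻¹ * (if (h.getLast?.getD init).1 ≠ (h.getLast?.getD init).2 then
          (play1 K3 piStarC πR init t) h else 0) := by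
      intro h
      by_cases hP : (play1 K3 piStarC πR init t) h = 0
      · simp [hP]
      · obtain ⟨p, hp⟩ := play1_support K3 piStarC πR init t h ((PMF.mem_support_iff _ _).mpr hP)
        have hget : h.getLast?.getD init = p := by rw [hp]; rfl
        by_cases hd : p.1 = p.2
        · have hz : ∀ u w : Fin 3, (if (step1 K3 p u w).1 ≠
              (step1 K3 p u w).2 then (1 : ENNReal) else 0) = 0 := by
            intro u w
            rw [step1_K3]
            simp [hd]
          simp only [hget, hz, mul_zero, tsum_zero, hd, ne_eq, not_true_eq_false,
            if_false, mul_zero]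
        · have hc : piStarC h = unifNot p.1 := by
            rw [piStarC, hp]
            simp [hd]
          rw [hc, hget]
          have : (p.1, p.2) = p := rfl
          rw [← this, core_cop p.1 p.2 hd (πR h)]
          simp only [ne_eq, hd, not_false_eq_true, if_true]
          ring
    simp only [key]
    rw [ENNReal.tsum_mul_left, ← freeProb1_eq_tsum, ih, pow_succ]
    ring

lemma free_robStar (πC : Strat (Fin 3)) (init : Fin 3 × Fin 3) (hinit : init.1 ≠ init.2)
    (t : ℕ) : freeProb1 K3 πC piStarR init t = 2⁻¹ ^ t := by
  induction t with
  | zero =>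
    rw [freeProb1_eq_tsum]
    rw [show (play1 K3 πC piStarR init 0) = PMF.pure [init] from rfl]
    rw [tsum_eq_single [init]]
    · simp [hinit]
    · intro h hne
      simp [PMF.pure_apply, hne]
  | succ t ih =>
    rw [freeProb1_succ]
    have key : ∀ h : List (Fin 3 × Fin 3), (play1 K3 πC piStarR init t) h *
        (∑' u : Fin 3, πC h u * ∑' w : Fin 3, piStarR h w *
          (if (step1 K3 (h.getLast?.getD init) u w).1 ≠
              (step1 K3 (h.getLast?.getD init) u w).2 then (1 : ENNReal) else 0)) =
        2⁻¹ * (if (h.getLast?.getD init).1 ≠ (h.getLast?.getD init).2 then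
          (play1 K3 πC piStarR init t) h else 0) := by
      intro h
      by_cases hP : (play1 K3 πC piStarR init t) h = 0
      · simp [hP]
      · obtain ⟨p, hp⟩ := play1_support K3 πC piStarR init t h ((PMF.mem_support_iff _ _).mpr hP)
        have hget : h.getLast?.getD init = p := by rw [hp]; rfl
        by_cases hd : p.1 = p.2
        · have hz : ∀ u w : Fin 3, (if (step1 K3 p u w).1 ≠
              (step1 K3 p u w).2 then (1 : ENNReal) else 0) = 0 := by
            intro u w
            rw [step1_K3]
            simp [hd]
          simp only [hget, hz, mul_zero, tsum_zero, hd, ne_eq, not_true_eq_false,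
            if_false, mul_zero]
        · have hc : piStarR h = unifNot p.2 := by
            rw [piStarR, hp]
            simp [hd]
          rw [hc, hget]
          have : (p.1, p.2) = p := rfl
          rw [← this, core_rob p.1 p.2 hd (πC h)]
          simp only [ne_eq, hd, not_false_eq_true, if_true]
          ring
    simp only [key]
    rw [ENNReal.tsum_mul_left, ← freeProb1_eq_tsum, ih, pow_succ]
    ring

lemma play1_diag_support (πC πR : Strat (Fin 3)) (x : Fin 3) (t : ℕ)
    (h : List (Fin 3 × Fin 3)) (hh : h ∈ (play1 K3 πC πR (x, x) t).support) :
    (h.getLast?.getD (x, x)).1 = (h.getLast?.getD (x, x)).2 := by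
  induction t generalizing h with
  | zero =>
    simp only [play1, PMF.support_pure, Set.mem_singleton_iff] at hh
    simp [hh]
  | succ t ih =>
    simp only [play1, PMF.support_bind, Set.mem_iUnion, PMF.support_pure,
      Set.mem_singleton_iff] at hh
    obtain ⟨h', hh', u, _, w, _, rfl⟩ := hh
    have := ih h' hh'
    rw [List.getLast?_concat]
    simp only [Option.getD_some]
    rw [step1_K3]
    simp [this]

lemma free_diag (πC πR : Strat (Fin 3)) (x : Fin 3) (t : ℕ) :
    freeProb1 K3 πC πR (x, x) t = 0 := by
  rw [freeProb1_eq_tsum]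
  refine ENNReal.summable.tsum_eq_zero_iff.mpr fun h => ?_
  by_cases hd : (h.getLast?.getD (x, x)).1 = (h.getLast?.getD (x, x)).2
  · simp [hd]
  · simp only [ne_eq, hd, not_false_eq_true, if_true]
    by_contra hne
    exact hd (play1_diag_support πC πR x t h ((PMF.mem_support_iff _ _).mpr hne))

lemma tsum_half_pow : (∑' t : ℕ, (2⁻¹ : ENNReal) ^ t) = 2 := by
  rw [ENNReal.tsum_geometric]
  rw [ENNReal.one_sub_inv_two, inv_inv]

lemma payoff_copStar (πR : Strat (Fin 3)) (init : Fin 3 × Fin 3) (hinit : init.1 ≠ init.2) :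
    payoff K3 piStarC πR init = 2 := by
  rw [payoff]
  simp only [free_copStar πR init hinit]
  exact tsum_half_pow

lemma payoff_robStar (πC : Strat (Fin 3)) (init : Fin 3 × Fin 3) (hinit : init.1 ≠ init.2) :
    payoff K3 πC piStarR init = 2 := by
  rw [payoff]
  simp only [free_robStar πC init hinit]
  exact tsum_half_pow

lemma payoff_diag (πC πR : Strat (Fin 3)) (x : Fin 3) :
    payoff K3 πC πR (x, x) = 0 := by
  rw [payoff]
  simp [free_diag]

/-- on `K₃`, (a) if both players use `π*`, the expected capture time
from every initial position `(x, y)` with `x ≠ y` equals `2`; and (b) these strategies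
are optimal, i.e. the value of the game is `2` from every position `(x, y)` with
`x ≠ y` (and `0` on the diagonal). -/
theorem k3_value_two :
    (∀ p : Fin 3 × Fin 3, p.1 ≠ p.2 → payoff K3 piStarC piStarR p = 2) ∧
    (∀ p : Fin 3 × Fin 3, p.1 ≠ p.2 →
        (⨆ πR : Strat (Fin 3), payoff K3 piStarC πR p) = gameValue K3 p ∧
        (⨅ πC : Strat (Fin 3), payoff K3 πC piStarR p) = gameValue K3 p ∧
        gameValue K3 p = 2) ∧
    (∀ x : Fin 3, gameValue K3 (x, x) = 0) := by
  have hsupC : ∀ p : Fin 3 × Fin 3, p.1 ≠ p.2 →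
      (⨆ πR : Strat (Fin 3), payoff K3 piStarC πR p) = 2 := by
    intro p hp
    apply le_antisymm
    · exact iSup_le fun πR => (payoff_copStar πR p hp).le
    · exact le_trans (payoff_copStar piStarR p hp).ge (le_iSup (fun pr => payoff K3 piStarC pr p) piStarR)
  have hval : ∀ p : Fin 3 × Fin 3, p.1 ≠ p.2 → gameValue K3 p = 2 := by
    intro p hp
    apply le_antisymm
    · exact le_trans (iInf_le _ piStarC) (hsupC p hp).le
    · refine le_iInf fun πC => ?_
      exact le_trans (payoff_robStar πC p hp).ge (le_iSup (fun pr => payoff K3 πC pr p) piStarR)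
  refine ⟨fun p hp => payoff_copStar piStarR p hp, fun p hp => ?_, fun x => ?_⟩
  · refine ⟨(hsupC p hp).trans (hval p hp).symm, ?_, hval p hp⟩
    rw [hval p hp]
    apply le_antisymm
    · exact le_trans (iInf_le _ piStarC) (payoff_robStar piStarC p hp).le
    · exact le_iInf fun πC => (payoff_robStar πC p hp).ge
  · rw [gameValue]
    simp only [payoff_diag]
    simp
end
end
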